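/- Let A be a C*-algebra, let ε > 0, and let a, b be positive elements of A with ‖a - b‖ < ε. Then (a - ε)₊ is Cuntz subequivalent to b. -/

import Mathlib

open Filter Topology

/-- Cuntz subequivalence: `a ≾ b` iff some sequence `vₙ b vₙ*` converges to `a`. -/
def CuntzSubeq {R : Type*} [Mul R] [Star R] [TopologicalSpace R] (a b : R) : Prop :=
  ∃ v : ℕ → R, Tendsto (fun n => v n * b * star (v n)) atTop (𝓝 a)

/-- `(a - ε)₊`, via the continuous functional calculus applied to `t ↦ max (t - ε) 0`. -/
noncomputable def cutoff {A : Type*} [NonUnitalRing A] [StarRing A] [Module ℝ A]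
    [SMulCommClass ℝ A A] [IsScalarTower ℝ A A] [TopologicalSpace A]
    [NonUnitalContinuousFunctionalCalculus ℝ A (IsSelfAdjoint : A → Prop)]
    (ε : ℝ) (a : A) : A :=
  cfcₙ (fun t : ℝ => max (t - ε) 0) a


lemma sqrt_mul_self_cfc {M : Type*} [CStarAlgebra M] [PartialOrder M] [StarOrderedRing M]
    {y : M} (hy : 0 ≤ y) : cfc Real.sqrt y * cfc Real.sqrt y = y := by
  rw [← cfc_mul _ _ y (by fun_prop) (by fun_prop)]
  calc cfc (fun s => Real.sqrt s * Real.sqrt s) y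
      = cfc (id : ℝ → ℝ) y :=
        cfc_congr fun s hs => Real.mul_self_sqrt (spectrum_nonneg_of_nonneg hy hs)
    _ = y := cfc_id ℝ y

/-- If `0 ≤ y ≤ z`, then conjugating `z` by `√y · dₙ` converges to `y`. -/
lemma limit_lemma {M : Type*} [CStarAlgebra M] [PartialOrder M] [StarOrderedRing M]
    {y z : M} (hy : 0 ≤ y) (hz : 0 ≤ z) (hyz : y ≤ z) :
    ∃ d : ℕ → M, (∀ n, IsSelfAdjoint (d n)) ∧
      Tendsto (fun n => (cfc Real.sqrt y * d n) * z * star (cfc Real.sqrt y * d n))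
        atTop (𝓝 y) := by
  have hy' : IsSelfAdjoint y := .of_nonneg hy
  have hz' : IsSelfAdjoint z := .of_nonneg hz
  set sy := cfc Real.sqrt y with hsy_def
  have hsy : IsSelfAdjoint sy := cfc_predicate _ y
  have hsy2 : sy * sy = y := sqrt_mul_self_cfc hy
  have hzspec : ∀ s ∈ spectrum ℝ z, 0 ≤ s := spectrum_nonneg_of_nonneg hz
  set t : ℕ → ℝ := fun n => ((n : ℝ) + 1)⁻¹ with ht_def
  have ht : ∀ n, 0 < t n := fun n => by positivity
  set g : ℕ → ℝ → ℝ := fun n s => Real.sqrt ((s + t n)⁻¹) with hg_def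
  have hg2 : ∀ n, ∀ s ∈ spectrum ℝ z, g n s * g n s = (s + t n)⁻¹ := by
    intro n s hs
    have h1 := hzspec s hs
    have h2 := ht n
    exact Real.mul_self_sqrt (by positivity)
  have hgcont : ∀ n, ContinuousOn (g n) (spectrum ℝ z) := by
    intro n
    apply Real.continuous_sqrt.comp_continuousOn
    exact (continuousOn_id.add continuousOn_const).inv₀
      fun s hs => by have := hzspec s hs; have := ht n; exact (show (0:ℝ) < s + t n by linarith).ne'
  set d : ℕ → M := fun n => cfc (g n) z with hd_def
  have hd : ∀ n, IsSelfAdjoint (d n) := fun n => cfc_predicate _ z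
  refine ⟨d, hd, ?_⟩
  have hconst : ∀ n, cfc (fun s : ℝ => 1 - t n • (g n s * g n s)) z
      = 1 - t n • (d n * d n) := by
    intro n
    rw [cfc_sub _ _ z (by fun_prop)
        (by exact (((hgcont n).mul (hgcont n)).const_smul (t n) : _)),
      cfc_smul _ _ z, cfc_mul _ _ z (hgcont n) (hgcont n), cfc_const 1 z, map_one]
  have dzd : ∀ n, d n * z * d n = 1 - t n • (d n * d n) := by
    intro n
    have h1 : cfc (fun s => g n s * (s * g n s)) z = d n * (z * d n) := by
      rw [cfc_mul (g n) (fun s => s * g n s) z (hgcont n) ((continuousOn_id' _).mul (hgcont n)),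
        cfc_mul (fun s : ℝ => s) _ z (continuousOn_id' _) (hgcont n), cfc_id' ℝ z]
    have h2 : cfc (fun s => g n s * (s * g n s)) z
        = cfc (fun s : ℝ => 1 - t n • (g n s * g n s)) z := by
      apply cfc_congr
      intro s hs
      show g n s * (s * g n s) = 1 - t n • (g n s * g n s)
      have hs0 := hzspec s hs
      have hst : 0 < s + t n := by have := ht n; positivity
      rw [mul_left_comm, hg2 n s hs, smul_eq_mul]
      field_simp
      ring
    rw [← mul_assoc] at h1
    rw [← h1, h2, hconst n]
  -- norm bound
  have hbound : ∀ n, ‖(sy * d n) * z * star (sy * d n) - y‖ ≤ t n := by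
    intro n
    have hstar : star (sy * d n) = d n * sy := by
      rw [star_mul, (hd n).star_eq, hsy.star_eq]
    have hexp : (sy * d n) * z * star (sy * d n) - y
        = -(t n • ((sy * d n) * star (sy * d n))) := by
      rw [hstar]
      calc sy * d n * z * (d n * sy) - y
          = sy * (d n * z * d n) * sy - y := by noncomm_ring
        _ = sy * (1 - t n • (d n * d n)) * sy - y := by rw [dzd n]
        _ = -(t n • (sy * d n * (d n * sy))) := by
            rw [mul_sub, sub_mul, mul_one, hsy2, mul_smul_comm, smul_mul_assoc]
            simp only [mul_assoc]
            abel
    rw [hexp, norm_neg, norm_smul, Real.norm_eq_abs, abs_of_pos (ht n)]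
    have hnorm1 : ‖(sy * d n) * star (sy * d n)‖ = ‖d n * y * d n‖ := by
      rw [CStarRing.norm_self_mul_star, ← CStarRing.norm_star_mul_self, hstar,
        show d n * sy * (sy * d n) = d n * (sy * sy) * d n by noncomm_ring, hsy2]
    have hle : d n * y * d n ≤ d n * z * d n := by
      simpa only [(hd n).star_eq] using star_left_conjugate_le_conjugate hyz (d n)
    have hpos : 0 ≤ d n * y * d n := by
      simpa only [(hd n).star_eq] using star_left_conjugate_nonneg hy (d n)
    have hdzd_norm : ‖d n * z * d n‖ ≤ 1 := by
      have heq : d n * z * d n = cfc (fun s : ℝ => 1 - t n • (g n s * g n s)) z := by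
        rw [dzd n, hconst n]
      rw [heq]
      apply norm_cfc_le zero_le_one
      intro s hs
      have hs0 := hzspec s hs
      have hst : 0 < s + t n := by have := ht n; positivity
      rw [hg2 n s hs, smul_eq_mul, Real.norm_eq_abs, abs_le]
      have h1 : t n * (s + t n)⁻¹ ≤ 1 := by
        rw [← div_eq_mul_inv, div_le_one hst]; linarith
      have h2 : 0 ≤ t n * (s + t n)⁻¹ := by have := ht n; positivity
      constructor <;> linarith
    calc t n * ‖(sy * d n) * star (sy * d n)‖ = t n * ‖d n * y * d n‖ := by rw [hnorm1]
      _ ≤ t n * ‖d n * z * d n‖ := by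
          gcongr
          exact CStarAlgebra.norm_le_norm_of_nonneg_of_le hpos hle
      _ ≤ t n * 1 := by gcongr
      _ = t n := mul_one _
  rw [tendsto_iff_norm_sub_tendsto_zero]
  apply squeeze_zero (fun n => norm_nonneg _) hbound
  simpa only [ht_def, one_div] using tendsto_one_div_add_atTop_nhds_zero_nat (𝕜 := ℝ)

/-- If `a, b ≥ 0` and `‖a - b‖ < ε`, then `(a - ε)₊ ≾ b`. -/
theorem cutoff_cuntzSubeq_of_norm_lt {A : Type*} [NonUnitalCStarAlgebra A] [PartialOrder A]
    [StarOrderedRing A] (ε : ℝ) (hε : 0 < ε) (a b : A) (ha : 0 ≤ a) (hb : 0 ≤ b)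
    (hab : ‖a - b‖ < ε) : CuntzSubeq (cutoff ε a) b := by
  set r := ‖a - b‖ with hr_def
  have hr0 : 0 ≤ r := norm_nonneg _
  have hrε : r < ε := hab
  have ha' : (0 : Unitization ℂ A) ≤ a := Unitization.inr_nonneg_iff.mpr ha
  have hb' : (0 : Unitization ℂ A) ≤ b := Unitization.inr_nonneg_iff.mpr hb
  have hasa : IsSelfAdjoint (a : Unitization ℂ A) := .of_nonneg ha'
  have hbsa : IsSelfAdjoint (b : Unitization ℂ A) := .of_nonneg hb'
  -- the auxiliary function h
  set h : ℝ → ℝ := fun t => Real.sqrt (max (t - ε) 0 / max (t - r) (ε - r)) with hh_def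
  have hhcont : Continuous h := by
    apply Real.continuous_sqrt.comp
    apply Continuous.div (by fun_prop) (by fun_prop)
    intro t
    have h1 : ε - r ≤ max (t - r) (ε - r) := le_max_right _ _
    have h2 : 0 < ε - r := by linarith
    exact ne_of_gt (lt_of_lt_of_le h2 h1)
  set c : Unitization ℂ A := cfc h (a : Unitization ℂ A) with hc_def
  have hcsa : IsSelfAdjoint c := cfc_predicate _ _
  -- y
  set y : Unitization ℂ A := cfc (fun t : ℝ => max (t - ε) 0) (a : Unitization ℂ A) with hy_def
  have hy_eq : ((cutoff ε a : A) : Unitization ℂ A) = y :=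
    Unitization.real_cfcₙ_eq_cfc_inr a _ (by simp [hε.le])
  have hy : 0 ≤ y := cfc_nonneg fun t _ => le_max_right _ _
  -- pointwise identity
  have key : ∀ t : ℝ, h t * ((t - r) * h t) = max (t - ε) 0 := by
    intro t
    rcases le_or_gt t ε with htε | htε
    · have h1 : max (t - ε) 0 = 0 := max_eq_right (by linarith)
      rw [hh_def]
      simp only [h1, zero_div, Real.sqrt_zero, zero_mul, mul_zero]
    · have h1 : max (t - ε) 0 = t - ε := max_eq_left (by linarith)
      have h2 : max (t - r) (ε - r) = t - r := max_eq_left (by linarith)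
      have htr : 0 < t - r := by linarith
      have hnn : 0 ≤ (t - ε) / (t - r) := div_nonneg (by linarith) (by linarith)
      rw [hh_def]
      simp only [h1, h2]
      rw [mul_left_comm, Real.mul_self_sqrt hnn]
      field_simp
  -- y = c * (a - r•1) * c
  have hident : y = c * ((a : Unitization ℂ A) - algebraMap ℝ (Unitization ℂ A) r) * c := by
    have e1 : y = cfc (fun t : ℝ => h t * ((t - r) * h t)) (a : Unitization ℂ A) :=
      (cfc_congr fun t _ => key t).symm
    rw [e1, cfc_mul _ _ (a : Unitization ℂ A) hhcont.continuousOn (by fun_prop),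
      cfc_mul (fun t : ℝ => t - r) _ (a : Unitization ℂ A) (by fun_prop) hhcont.continuousOn,
      cfc_sub (fun t : ℝ => t) (fun _ => r) (a : Unitization ℂ A) (by fun_prop) (by fun_prop),
      cfc_id' ℝ (a : Unitization ℂ A), cfc_const r (a : Unitization ℂ A)]
    noncomm_ring
  -- a - r•1 ≤ b
  have hle1 : (a : Unitization ℂ A) - algebraMap ℝ (Unitization ℂ A) r ≤ b := by
    have h1 : (a : Unitization ℂ A) - b ≤ algebraMap ℝ (Unitization ℂ A)
        ‖(a : Unitization ℂ A) - (b : Unitization ℂ A)‖ :=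
      IsSelfAdjoint.le_algebraMap_norm_self (hasa.sub hbsa)
    rw [← Unitization.inr_sub ℂ a b, Unitization.norm_inr, Unitization.inr_sub] at h1
    exact sub_le_comm.mp h1
  have hyz : y ≤ c * (b : Unitization ℂ A) * c := by
    rw [hident]
    simpa only [hcsa.star_eq] using star_left_conjugate_le_conjugate hle1 c
  set z : Unitization ℂ A := c * (b : Unitization ℂ A) * c with hz_def
  have hz : 0 ≤ z := by
    simpa only [hcsa.star_eq] using star_left_conjugate_nonneg hb' c
  obtain ⟨d, hdsa, hlim⟩ := limit_lemma hy hz hyz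
  -- √y comes from A
  have hsqrt : cfc Real.sqrt y = ((cfcₙ Real.sqrt (cutoff ε a) : A) : Unitization ℂ A) := by
    rw [← hy_eq]
    exact (Unitization.real_cfcₙ_eq_cfc_inr _ _ (by simp)).symm
  set w : ℕ → Unitization ℂ A := fun n => cfc Real.sqrt y * d n * c with hw_def
  have hmem : ∀ n, ((w n).snd : Unitization ℂ A) = w n := by
    intro n
    have hfst : (w n).fst = 0 := by
      rw [hw_def]
      simp only [hsqrt, Unitization.fst_mul, Unitization.fst_inr, zero_mul]
    conv_rhs => rw [← Unitization.inl_fst_add_inr_snd_eq (w n)]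
    rw [hfst]
    simp
  refine ⟨fun n => (w n).snd, ?_⟩
  have hemb := (Unitization.isometry_inr (𝕜 := ℂ) (A := A)).isEmbedding
  rw [hemb.tendsto_nhds_iff]
  have : ((↑) : A → Unitization ℂ A) ∘ (fun n => (w n).snd * b * star ((w n).snd))
      = fun n => (cfc Real.sqrt y * d n) * z * star (cfc Real.sqrt y * d n) := by
    funext n
    show (((w n).snd * b * star ((w n).snd) : A) : Unitization ℂ A) = _
    rw [Unitization.inr_mul ℂ, Unitization.inr_mul ℂ, Unitization.inr_star, hmem n, hw_def]
    rw [star_mul, hcsa.star_eq, hz_def]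
    noncomm_ring
  rw [this, hy_eq]
  exact hlim
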